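/- Let (S, Δ) be an enriched quantum logic and let s : Δ → [0,1] satisfy s(S) = 1 and s(A ∪ B) = s(A) + s(B) whenever A, B ∈ Δ are disjoint. If s is subadditive, i.e., for all A, B ∈ Δ there exists C ∈ Δ with A ∪ B ⊆ C and s(A) + s(B) ≥ s(C), then s is a state: s(A △ B) ≤ s(A) + s(B) for all A, B ∈ Δ. -/
import Mathlib


open scoped symmDiff

/-- An enriched quantum logic (EQL) on a (nonempty) set `S` (here: the type `α`):
a collection `Δ` of subsets containing the whole set and closed under symmetric
difference. -/
def IsEQL {α : Type*} (Δ : Set (Set α)) : Prop :=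
  Set.univ ∈ Δ ∧ ∀ A ∈ Δ, ∀ B ∈ Δ, A ∆ B ∈ Δ

/-- A state on an EQL `(S, Δ)`: a `[0,1]`-valued map, normalized, additive on
disjoint pairs of `Δ`, and subadditive with respect to symmetric difference. -/
def IsState {α : Type*} (Δ : Set (Set α)) (s : Set α → ℝ) : Prop :=
  (∀ A ∈ Δ, s A ∈ Set.Icc (0 : ℝ) 1) ∧ s Set.univ = 1 ∧
    (∀ A ∈ Δ, ∀ B ∈ Δ, A ∩ B = ∅ → s (A ∪ B) = s A + s B) ∧
    (∀ A ∈ Δ, ∀ B ∈ Δ, s (A ∆ B) ≤ s A + s B)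

/-- A subadditive state is a state: if `s : Δ → [0,1]` is normalized, additive
on disjoint pairs, and for all `A, B ∈ Δ` there is `C ∈ Δ` with `A ∪ B ⊆ C`
and `s A + s B ≥ s C`, then `s` is a state. -/
theorem stmt12 {α : Type*} (Δ : Set (Set α)) (hΔ : IsEQL Δ)
    (s : Set α → ℝ)
    (hrange : ∀ A ∈ Δ, s A ∈ Set.Icc (0 : ℝ) 1)
    (huniv : s Set.univ = 1)
    (hadd : ∀ A ∈ Δ, ∀ B ∈ Δ, A ∩ B = ∅ → s (A ∪ B) = s A + s B)
    (hsubadd : ∀ A ∈ Δ, ∀ B ∈ Δ, ∃ C ∈ Δ, A ∪ B ⊆ C ∧ s C ≤ s A + s B) :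
    IsState Δ s := by
  refine ⟨hrange, huniv, hadd, ?_⟩
  intro A hA B hB
  obtain ⟨C, hC, hsub, hle⟩ := hsubadd A hA B hB
  have hD : A ∆ B ∈ Δ := hΔ.2 A hA B hB
  have hDC : A ∆ B ⊆ C := symmDiff_le_sup.trans hsub
  -- C \ (A ∆ B) = (A ∆ B) ∆ C ∈ Δ
  have hdiff : C \ (A ∆ B) ∈ Δ := by
    have h := hΔ.2 (A ∆ B) hD C hC
    rw [symmDiff_of_le hDC] at h
    simpa [Set.diff_eq, sdiff_eq, Set.inter_comm] using h
  have hmono : s (A ∆ B) ≤ s C := by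
    have hdisj : (A ∆ B) ∩ (C \ (A ∆ B)) = ∅ := by
      ext x; simp
    have hunion : (A ∆ B) ∪ (C \ (A ∆ B)) = C := Set.union_diff_cancel hDC
    have := hadd (A ∆ B) hD (C \ (A ∆ B)) hdiff hdisj
    rw [hunion] at this
    have hnn := (hrange _ hdiff).1
    linarith
  linarith
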